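/- Let f(x,y) = V(r), r = √(x²+y²), be a radial function on the unit disc in ℝ², where V ∈ C²((0,1)), f is integrable on the disc, V'(r) is integrable near zero on the real line (i.e., ∫_0^{1/2} |V'(r)| dr < ∞), and Δf = V''(r) + r^{-1}V'(r) is integrable with respect to Lebesgue measure near the origin in the plane. Then V''(r) is integrable near the origin in the plane (i.e., ∫_0^{1/2} |V''(r)| r dr < ∞), and consequently all second order partial derivatives of f are integrable near the origin, so f belongs to the second Sobolev class W^{1,2} in a neighborhood of the origin. -/

import Mathlib

open MeasureTheory Real

noncomputable section

/-- Euclidean magnitude of a vector in `ℝ²` (the radius `r`). -/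
def emag (v : ℝ × ℝ) : ℝ := Real.sqrt (v.1 ^ 2 + v.2 ^ 2)

/-- The open Euclidean disc of radius `R` centered at the origin in `ℝ²`. -/
def disc (R : ℝ) : Set (ℝ × ℝ) := {p : ℝ × ℝ | p.1 ^ 2 + p.2 ^ 2 < R ^ 2}

open Set
open scoped ENNReal NNReal

lemma continuous_emag : Continuous emag := by
  unfold emag; fun_prop

lemma emag_nonneg (p : ℝ × ℝ) : 0 ≤ emag p := Real.sqrt_nonneg _

lemma emag_pos {p : ℝ × ℝ} (hp : p ≠ 0) : 0 < emag p := by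
  have : p.1 ≠ 0 ∨ p.2 ≠ 0 := by
    by_contra h
    push_neg at h
    exact hp (Prod.ext h.1 h.2)
  apply Real.sqrt_pos.2
  rcases this with h | h
  · positivity
  · positivity

lemma ne_zero_of_emag_pos {p : ℝ × ℝ} (hp : 0 < emag p) : p ≠ 0 := by
  rintro rfl
  simp [emag] at hp

lemma mem_disc {R : ℝ} (hR : 0 < R) {p : ℝ × ℝ} : p ∈ disc R ↔ emag p < R := by
  rw [disc, Set.mem_setOf_eq, ← Real.sqrt_lt' hR]
  rfl

lemma measurableSet_disc {R : ℝ} : MeasurableSet (disc R) :=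
  (isOpen_lt (by fun_prop) continuous_const).measurableSet

lemma abs_dot_le (p v : ℝ × ℝ) : |p.1 * v.1 + p.2 * v.2| ≤ emag p * emag v := by
  have h1 : (p.1 * v.1 + p.2 * v.2) ^ 2 ≤ (p.1 ^ 2 + p.2 ^ 2) * (v.1 ^ 2 + v.2 ^ 2) := by
    nlinarith [sq_nonneg (p.1 * v.2 - p.2 * v.1)]
  calc |p.1 * v.1 + p.2 * v.2| = √((p.1 * v.1 + p.2 * v.2) ^ 2) := (Real.sqrt_sq_eq_abs _).symm
    _ ≤ √((p.1 ^ 2 + p.2 ^ 2) * (v.1 ^ 2 + v.2 ^ 2)) := Real.sqrt_le_sqrt h1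
    _ = emag p * emag v := by rw [Real.sqrt_mul (by positivity)]; rfl

/-- The continuous linear map `w ↦ v.1 * w.1 + v.2 * w.2`. -/
def dotCLM (v : ℝ × ℝ) : ℝ × ℝ →L[ℝ] ℝ :=
  v.1 • ContinuousLinearMap.fst ℝ ℝ ℝ + v.2 • ContinuousLinearMap.snd ℝ ℝ ℝ

lemma dotCLM_apply (u v : ℝ × ℝ) : dotCLM u v = u.1 * v.1 + u.2 * v.2 := by
  simp [dotCLM]

lemma hasFDerivAt_emag {p : ℝ × ℝ} (hp : p ≠ 0) :
    HasFDerivAt emag ((emag p)⁻¹ • dotCLM p) p := by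
  have hx : (0:ℝ) < p.1 ^ 2 + p.2 ^ 2 := by
    have := emag_pos hp
    rw [emag, Real.sqrt_pos] at this
    exact this
  have hfst : HasFDerivAt (fun q : ℝ × ℝ => q.1) (ContinuousLinearMap.fst ℝ ℝ ℝ) p :=
    hasFDerivAt_fst
  have hsnd : HasFDerivAt (fun q : ℝ × ℝ => q.2) (ContinuousLinearMap.snd ℝ ℝ ℝ) p :=
    hasFDerivAt_snd
  have hg : HasFDerivAt (fun q : ℝ × ℝ => q.1 * q.1 + q.2 * q.2)
      ((p.1 • ContinuousLinearMap.fst ℝ ℝ ℝ + p.1 • ContinuousLinearMap.fst ℝ ℝ ℝ) +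
        (p.2 • ContinuousLinearMap.snd ℝ ℝ ℝ + p.2 • ContinuousLinearMap.snd ℝ ℝ ℝ)) p :=
    (hfst.mul hfst).add (hsnd.mul hsnd)
  have hsq : HasDerivAt Real.sqrt (1 / (2 * Real.sqrt (p.1 * p.1 + p.2 * p.2)))
      (p.1 * p.1 + p.2 * p.2) := by
    apply Real.hasDerivAt_sqrt
    nlinarith
  have hcomp := hsq.comp_hasFDerivAt p hg
  have heq : emag = fun q : ℝ × ℝ => Real.sqrt (q.1 * q.1 + q.2 * q.2) := by
    funext q; simp [emag, pow_two]
  have hs : Real.sqrt (p.1 * p.1 + p.2 * p.2) = emag p := by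
    rw [emag, pow_two, pow_two]
  have hne : emag p ≠ 0 := (emag_pos hp).ne'
  have hD : (emag p)⁻¹ • dotCLM p =
      (1 / (2 * Real.sqrt (p.1 * p.1 + p.2 * p.2))) •
      ((p.1 • ContinuousLinearMap.fst ℝ ℝ ℝ + p.1 • ContinuousLinearMap.fst ℝ ℝ ℝ) +
        (p.2 • ContinuousLinearMap.snd ℝ ℝ ℝ + p.2 • ContinuousLinearMap.snd ℝ ℝ ℝ)) := by
    refine ContinuousLinearMap.ext fun v => ?_
    simp only [ContinuousLinearMap.coe_smul', Pi.smul_apply, dotCLM_apply, hs,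
      ContinuousLinearMap.add_apply, ContinuousLinearMap.coe_fst', ContinuousLinearMap.coe_snd',
      smul_eq_mul]
    field_simp
    ring
  rw [hD]
  exact hcomp.congr_of_eventuallyEq
    (Filter.Eventually.of_forall fun q => by simp [emag, pow_two, Function.comp])

open ENNReal in
lemma polar_lintegral {R : ℝ} (hR : 0 < R) (g : ℝ → ℝ≥0∞) (hg : Measurable g) :
    ∫⁻ p in disc R, g (emag p) = ENNReal.ofReal (2 * π) * ∫⁻ r in Ioo 0 R, ENNReal.ofReal r * g r := by
  set s : Set (ℝ × ℝ) := Ioo 0 R ×ˢ Ioo (-π) π with hs_def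
  have hs : MeasurableSet s := measurableSet_Ioo.prod measurableSet_Ioo
  have hsub : s ⊆ polarCoord.target := by
    rw [polarCoord_target]
    exact Set.prod_mono Ioo_subset_Ioi_self subset_rfl
  have hinj : Set.InjOn polarCoord.symm s := polarCoord.symm.injOn.mono hsub
  set B : ℝ × ℝ → ℝ × ℝ →L[ℝ] ℝ × ℝ := fun p =>
    LinearMap.toContinuousLinearMap (Matrix.toLin (Module.Basis.finTwoProd ℝ) (Module.Basis.finTwoProd ℝ)
      !![Real.cos p.2, -p.1 * Real.sin p.2; Real.sin p.2, p.1 * Real.cos p.2]) with hB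
  have hf' : ∀ x ∈ s, HasFDerivWithinAt polarCoord.symm (B x) s x := fun x _ =>
    (hasFDerivAt_polarCoord_symm x).hasFDerivWithinAt
  have B_det : ∀ p, (B p).det = p.1 := by
    intro p
    conv_rhs => rw [← one_mul p.1, ← Real.cos_sq_add_sin_sq p.2]
    simp only [hB, neg_mul, LinearMap.det_toContinuousLinearMap, LinearMap.det_toLin,
      Matrix.det_fin_two_of, sub_neg_eq_add]
    ring
  have h1 : polarCoord.symm '' s ⊆ disc R := by
    rintro - ⟨⟨r, θ⟩, ⟨hr, hθ⟩, rfl⟩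
    simp only [polarCoord_symm_apply, disc, Set.mem_setOf_eq]
    have h2 : (r * Real.cos θ) ^ 2 + (r * Real.sin θ) ^ 2 = r ^ 2 := by
      linear_combination r ^ 2 * (Real.sin_sq_add_cos_sq θ)
    rw [h2]
    nlinarith [hr.1, hr.2]
  have h2 : disc R ∩ polarCoord.source ⊆ polarCoord.symm '' s := by
    intro p hp
    refine ⟨polarCoord p, ?_, polarCoord.left_inv hp.2⟩
    have hmem := polarCoord.map_source hp.2
    rw [polarCoord_target] at hmem
    constructor
    · refine ⟨hmem.1, ?_⟩
      have := hp.1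
      rw [disc, Set.mem_setOf_eq] at this
      exact (Real.sqrt_lt' hR).2 this
    · exact hmem.2
  have hae : polarCoord.symm '' s =ᵐ[volume] disc R := by
    have hnull : volume polarCoord.sourceᶜ = 0 := ae_eq_univ.1 polarCoord_source_ae_eq_univ
    have hdiff : volume (disc R \ polarCoord.symm '' s) = 0 := by
      refine measure_mono_null (fun p hp => ?_) hnull
      intro hsrc
      exact hp.2 (h2 ⟨hp.1, hsrc⟩)
    have hdiff2 : volume (polarCoord.symm '' s \ disc R) = 0 := by
      rw [Set.diff_eq_empty.2 h1]; simp
    exact ae_eq_set.2 ⟨hdiff2, hdiff⟩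
  calc ∫⁻ p in disc R, g (emag p)
      = ∫⁻ p in polarCoord.symm '' s, g (emag p) := (setLIntegral_congr hae).symm
    _ = ∫⁻ x in s, ENNReal.ofReal |(B x).det| * g (emag (polarCoord.symm x)) :=
        lintegral_image_eq_lintegral_abs_det_fderiv_mul volume hs hf' hinj _
    _ = ∫⁻ x in s, ENNReal.ofReal x.1 * g x.1 := by
        refine setLIntegral_congr_fun hs (fun x hx => ?_)
        have hx1 : (0:ℝ) < x.1 := hx.1.1
        have hmag : emag (polarCoord.symm x) = x.1 := by
          rw [polarCoord_symm_apply, emag]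
          have : (x.1 * Real.cos x.2) ^ 2 + (x.1 * Real.sin x.2) ^ 2 = x.1 ^ 2 := by
            linear_combination x.1 ^ 2 * (Real.sin_sq_add_cos_sq x.2)
          rw [this, Real.sqrt_sq hx1.le]
        rw [B_det, abs_of_pos hx1, hmag]
    _ = ENNReal.ofReal (2 * π) * ∫⁻ r in Ioo 0 R, ENNReal.ofReal r * g r := by
        have hmeas : Measurable fun x : ℝ × ℝ => ENNReal.ofReal x.1 * g x.1 := by
          apply Measurable.mul
          · exact ENNReal.measurable_ofReal.comp measurable_fst
          · exact hg.comp measurable_fst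
        rw [hs_def, Measure.volume_eq_prod, ← Measure.prod_restrict,
          lintegral_prod _ hmeas.aemeasurable]
        simp only [lintegral_const, Measure.restrict_apply_univ, Real.volume_Ioo]
        rw [lintegral_mul_const _ (by exact (ENNReal.measurable_ofReal.comp measurable_id).mul hg :
          Measurable fun r : ℝ => ENNReal.ofReal r * g r)]
        rw [mul_comm]
        congr 1
        rw [sub_neg_eq_add]
        ring_nf

lemma polar_integrable_iff {F : ℝ → ℝ} (hF : Measurable F) {R : ℝ} (hR : 0 < R) :
    IntegrableOn (fun p : ℝ × ℝ => F (emag p)) (disc R) ↔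
      IntegrableOn (fun r : ℝ => F r * r) (Ioo 0 R) := by
  have hmeas1 : AEStronglyMeasurable (fun p : ℝ × ℝ => F (emag p))
      (volume.restrict (disc R)) :=
    (hF.comp continuous_emag.measurable).aestronglyMeasurable
  have hmeas2 : AEStronglyMeasurable (fun r : ℝ => F r * r) (volume.restrict (Ioo 0 R)) :=
    (hF.mul measurable_id).aestronglyMeasurable
  have key : (∫⁻ p in disc R, (‖F (emag p)‖₊ : ℝ≥0∞)) =
      ENNReal.ofReal (2 * π) * ∫⁻ r in Ioo 0 R, ENNReal.ofReal r * (‖F r‖₊ : ℝ≥0∞) :=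
    polar_lintegral hR (fun r => (‖F r‖₊ : ℝ≥0∞))
      (measurable_coe_nnreal_ennreal.comp hF.nnnorm)
  have key2 : (∫⁻ r in Ioo 0 R, (‖F r * r‖₊ : ℝ≥0∞)) =
      ∫⁻ r in Ioo 0 R, ENNReal.ofReal r * (‖F r‖₊ : ℝ≥0∞) := by
    refine setLIntegral_congr_fun measurableSet_Ioo (fun r hr => ?_)
    rw [nnnorm_mul, ENNReal.coe_mul, mul_comm, ← enorm_eq_nnnorm, Real.enorm_eq_ofReal hr.1.le]
  have hc0 : ENNReal.ofReal (2 * π) ≠ 0 := by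
    simp only [ne_eq, ENNReal.ofReal_eq_zero, not_le]
    positivity
  have hcT : ENNReal.ofReal (2 * π) ≠ ⊤ := ENNReal.ofReal_ne_top
  constructor
  · rintro ⟨-, hfin⟩
    refine ⟨hmeas2, ?_⟩
    rw [HasFiniteIntegral] at hfin ⊢
    simp only [enorm_eq_nnnorm] at hfin ⊢
    rw [key2]
    rw [key] at hfin
    by_contra h
    rw [not_lt, top_le_iff] at h
    rw [h, ENNReal.mul_top hc0] at hfin
    exact lt_irrefl _ hfin
  · rintro ⟨-, hfin⟩
    refine ⟨hmeas1, ?_⟩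
    rw [HasFiniteIntegral] at hfin ⊢
    simp only [enorm_eq_nnnorm] at hfin ⊢
    rw [key]
    rw [key2] at hfin
    exact ENNReal.mul_lt_top hcT.lt_top hfin

/-- Let `f(x,y) = V(r)`, `r = √(x²+y²)`, be a radial function on the unit disc with
`V ∈ C²((0,1))`, `f` integrable on the disc, `V'` integrable near zero on the line, and
`Δf = V'' + r⁻¹ V'` integrable near the origin in the plane. Then `V''` is integrable near
the origin in the plane (`∫₀^{1/2} |V''(r)| r dr < ∞`); consequently all second order
partial derivatives of `f` are integrable near the origin, and `f`, together with its first
and second order partial derivatives, is integrable near the origin (i.e. `f` belongs to the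
class `W^{1,2}` there). -/
theorem radial_function_integrable_laplacian_gives_W12 (V : ℝ → ℝ)
    (hV : ContDiffOn ℝ 2 V (Set.Ioo 0 1))
    (hf_int : IntegrableOn (fun p : ℝ × ℝ => V (emag p)) (disc 1))
    (hV'_int : IntegrableOn (deriv V) (Set.Ioo 0 (1 / 2)))
    (hΔf_int : IntegrableOn
      (fun p : ℝ × ℝ => deriv (deriv V) (emag p) + (emag p)⁻¹ * deriv V (emag p))
      (disc (1 / 2))) :
    IntegrableOn (fun r : ℝ => deriv (deriv V) r * r) (Set.Ioo 0 (1 / 2)) ∧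
    IntegrableOn (fun p : ℝ × ℝ => deriv (deriv V) (emag p)) (disc (1 / 2)) ∧
    (∀ v w : ℝ × ℝ, IntegrableOn
      (fun p : ℝ × ℝ => fderiv ℝ (fun q : ℝ × ℝ => fderiv ℝ (fun z : ℝ × ℝ => V (emag z)) q v) p w)
      (disc (1 / 2))) ∧
    (∀ v : ℝ × ℝ, IntegrableOn
      (fun p : ℝ × ℝ => fderiv ℝ (fun z : ℝ × ℝ => V (emag z)) p v) (disc (1 / 2))) ∧
    IntegrableOn (fun p : ℝ × ℝ => V (emag p)) (disc (1 / 2)) := by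
  have hmV' : Measurable (deriv V) := measurable_deriv V
  have hmV'' : Measurable (deriv (deriv V)) := measurable_deriv (deriv V)
  have hR : (0:ℝ) < 1 / 2 := by norm_num
  -- Part 1
  have hΔr : IntegrableOn (fun r : ℝ => (deriv (deriv V) r + r⁻¹ * deriv V r) * r)
      (Ioo 0 (1/2)) :=
    (polar_integrable_iff (hmV''.add (measurable_inv.mul hmV')) hR).1 hΔf_int
  have P1 : IntegrableOn (fun r : ℝ => deriv (deriv V) r * r) (Ioo 0 (1/2)) := by
    have h : IntegrableOn
        (fun r : ℝ => (deriv (deriv V) r + r⁻¹ * deriv V r) * r - deriv V r)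
        (Ioo 0 (1/2)) := hΔr.sub hV'_int
    refine h.congr_fun (fun r hr => ?_) measurableSet_Ioo
    have hr0 : r ≠ 0 := ne_of_gt hr.1
    have h1 : r⁻¹ * deriv V r * r = deriv V r := by field_simp
    linear_combination h1
  -- Part 2
  have P2 : IntegrableOn (fun p : ℝ × ℝ => deriv (deriv V) (emag p)) (disc (1/2)) :=
    (polar_integrable_iff hmV'' hR).2 P1
  -- W = V' * r⁻¹ composed with emag is integrable on the disc
  have PWr : IntegrableOn (fun r : ℝ => (deriv V r * r⁻¹) * r) (Ioo 0 (1/2)) := by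
    refine hV'_int.congr_fun (fun r hr => ?_) measurableSet_Ioo
    have hr0 : r ≠ 0 := ne_of_gt hr.1
    field_simp
  have PW : IntegrableOn (fun p : ℝ × ℝ => deriv V (emag p) * (emag p)⁻¹) (disc (1/2)) :=
    (polar_integrable_iff (hmV'.mul measurable_inv) hR).2 PWr
  -- V' ∘ emag integrable on the disc
  have PV'r : IntegrableOn (fun r : ℝ => deriv V r * r) (Ioo 0 (1/2)) := by
    refine Integrable.mono' (hV'_int.norm.mul_const (1/2))
      ((hmV'.mul measurable_id).aestronglyMeasurable) ?_
    rw [ae_restrict_iff' measurableSet_Ioo]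
    refine Filter.Eventually.of_forall fun r hr => ?_
    rw [Real.norm_eq_abs, abs_mul]
    exact mul_le_mul_of_nonneg_left (by rw [abs_of_pos hr.1]; exact hr.2.le) (abs_nonneg _)
  have PV' : IntegrableOn (fun p : ℝ × ℝ => deriv V (emag p)) (disc (1/2)) :=
    (polar_integrable_iff hmV' hR).2 PV'r
  -- Part 5
  have P5 : IntegrableOn (fun p : ℝ × ℝ => V (emag p)) (disc (1/2)) := by
    apply hf_int.mono_set
    intro p hp
    rw [disc, Set.mem_setOf_eq] at hp ⊢
    nlinarith
  -- differential facts
  have hU : IsOpen {q : ℝ × ℝ | 0 < emag q ∧ emag q < 1} :=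
    isOpen_Ioo.preimage continuous_emag
  set W : ℝ → ℝ := fun s => deriv V s * s⁻¹ with hW_def
  have hV1 : ∀ r ∈ Ioo (0:ℝ) 1, HasDerivAt V (deriv V r) r := fun r hr =>
    ((hV.contDiffAt (isOpen_Ioo.mem_nhds hr)).differentiableAt (by norm_num)).hasDerivAt
  have hVd : ContDiffOn ℝ 1 (deriv V) (Ioo 0 1) :=
    hV.deriv_of_isOpen isOpen_Ioo (by norm_num)
  have hV2 : ∀ r ∈ Ioo (0:ℝ) 1, HasDerivAt (deriv V) (deriv (deriv V) r) r := fun r hr =>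
    ((hVd.contDiffAt (isOpen_Ioo.mem_nhds hr)).differentiableAt (by norm_num)).hasDerivAt
  have hWd : ∀ r ∈ Ioo (0:ℝ) 1, HasDerivAt W
      (deriv (deriv V) r * r⁻¹ + deriv V r * (-(r ^ 2)⁻¹)) r := fun r hr =>
    (hV2 r hr).mul (hasDerivAt_inv (ne_of_gt hr.1))
  have hfd : ∀ q : ℝ × ℝ, 0 < emag q → emag q < 1 →
      fderiv ℝ (fun z => V (emag z)) q = W (emag q) • dotCLM q := by
    intro q h0 h1
    have hq0 : q ≠ 0 := ne_zero_of_emag_pos h0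
    have h := ((hV1 (emag q) ⟨h0, h1⟩).comp_hasFDerivAt q (hasFDerivAt_emag hq0)).fderiv
    rw [show (fun z : ℝ × ℝ => V (emag z)) = V ∘ emag from rfl, h, smul_smul]
  have hae0 : ∀ᵐ p : ℝ × ℝ ∂(volume.restrict (disc (1/2))), p ≠ 0 := by
    refine ae_restrict_of_ae ?_
    rw [MeasureTheory.ae_iff]
    refine measure_mono_null (fun p hp => ?_) (?_ : volume (({0} : Set ℝ) ×ˢ (univ : Set ℝ)) = 0)
    · simp only [Set.mem_setOf_eq, not_not] at hp
      simp [hp]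
    · rw [Measure.volume_eq_prod, Measure.prod_prod]
      simp
  -- Part 4
  have P4 : ∀ v : ℝ × ℝ, IntegrableOn
      (fun p : ℝ × ℝ => fderiv ℝ (fun z : ℝ × ℝ => V (emag z)) p v) (disc (1/2)) := by
    intro v
    refine Integrable.mono' (PV'.norm.mul_const (emag v))
      ((measurable_fderiv_apply_const ℝ _ v).aestronglyMeasurable) ?_
    filter_upwards [hae0, ae_restrict_mem measurableSet_disc] with p hp0 hpmem
    have h0 : 0 < emag p := emag_pos hp0
    have h1 : emag p < 1/2 := (mem_disc hR).1 hpmem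
    rw [hfd p h0 (lt_trans h1 (by norm_num))]
    simp only [ContinuousLinearMap.coe_smul', Pi.smul_apply, smul_eq_mul, dotCLM_apply,
      Real.norm_eq_abs]
    have hWabs : |W (emag p)| = |deriv V (emag p)| * (emag p)⁻¹ := by
      rw [hW_def]; dsimp only
      rw [abs_mul, abs_inv, abs_of_pos h0]
    calc |W (emag p) * (p.1 * v.1 + p.2 * v.2)|
        = (|deriv V (emag p)| * (emag p)⁻¹) * |p.1 * v.1 + p.2 * v.2| := by
          rw [abs_mul, hWabs]
      _ ≤ (|deriv V (emag p)| * (emag p)⁻¹) * (emag p * emag v) := by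
          gcongr
          exact abs_dot_le p v
      _ = |deriv V (emag p)| * emag v := by
          field_simp
  -- Part 3
  have P3 : ∀ v w : ℝ × ℝ, IntegrableOn
      (fun p : ℝ × ℝ => fderiv ℝ
        (fun q : ℝ × ℝ => fderiv ℝ (fun z : ℝ × ℝ => V (emag z)) q v) p w)
      (disc (1/2)) := by
    intro v w
    refine Integrable.mono'
      (((P2.abs.add (PW.abs.const_mul 2)).mul_const (emag v * emag w)))
      ((measurable_fderiv_apply_const ℝ _ w).aestronglyMeasurable) ?_
    filter_upwards [hae0, ae_restrict_mem measurableSet_disc] with p hp0 hpmem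
    have h0 : 0 < emag p := emag_pos hp0
    have h1 : emag p < 1/2 := (mem_disc hR).1 hpmem
    have hU1 : emag p < 1 := lt_trans h1 (by norm_num)
    have hev : (fun q : ℝ × ℝ => fderiv ℝ (fun z : ℝ × ℝ => V (emag z)) q v) =ᶠ[nhds p]
        (fun q : ℝ × ℝ => W (emag q) * (q.1 * v.1 + q.2 * v.2)) := by
      filter_upwards [hU.mem_nhds (show p ∈ _ from ⟨h0, hU1⟩)] with q hq
      rw [hfd q hq.1 hq.2]
      simp [dotCLM_apply]
    have hq0 : p ≠ 0 := ne_zero_of_emag_pos h0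
    have hc : HasFDerivAt (fun q : ℝ × ℝ => W (emag q))
        ((deriv (deriv V) (emag p) * (emag p)⁻¹ + deriv V (emag p) * (-((emag p) ^ 2)⁻¹)) •
          ((emag p)⁻¹ • dotCLM p)) p :=
      (hWd (emag p) ⟨h0, hU1⟩).comp_hasFDerivAt p (hasFDerivAt_emag hq0)
    have hd : HasFDerivAt (fun q : ℝ × ℝ => q.1 * v.1 + q.2 * v.2) (dotCLM v) p :=
      ((hasFDerivAt_fst (𝕜 := ℝ)).mul_const v.1).add ((hasFDerivAt_snd).mul_const v.2)
    have hH : HasFDerivAt (fun q : ℝ × ℝ => W (emag q) * (q.1 * v.1 + q.2 * v.2)) _ p := hc.mul hd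
    rw [hev.fderiv_eq, hH.fderiv]
    simp only [ContinuousLinearMap.add_apply, ContinuousLinearMap.coe_smul', Pi.smul_apply,
      smul_eq_mul, dotCLM_apply, Real.norm_eq_abs]
    set r := emag p with hr_def
    have hWabs : |W r| = |deriv V r| * r⁻¹ := by
      rw [hW_def]; dsimp only
      rw [abs_mul, abs_inv, abs_of_pos h0]
    have hC : |deriv (deriv V) r * r⁻¹ + deriv V r * -((r ^ 2)⁻¹)| ≤
        |deriv (deriv V) r| * r⁻¹ + |deriv V r| * (r ^ 2)⁻¹ := by
      refine (abs_add_le _ _).trans ?_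
      rw [abs_mul, abs_mul, abs_neg, abs_inv, abs_inv, abs_of_pos h0,
        abs_of_pos (pow_pos h0 2)]
    calc |W r * (v.1 * w.1 + v.2 * w.2) + (p.1 * v.1 + p.2 * v.2) *
          ((deriv (deriv V) r * r⁻¹ + deriv V r * -((r ^ 2)⁻¹)) * (r⁻¹ * (p.1 * w.1 + p.2 * w.2)))|
        ≤ |W r * (v.1 * w.1 + v.2 * w.2)| + |(p.1 * v.1 + p.2 * v.2) *
          ((deriv (deriv V) r * r⁻¹ + deriv V r * -((r ^ 2)⁻¹)) *
            (r⁻¹ * (p.1 * w.1 + p.2 * w.2)))| := abs_add_le _ _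
      _ = (|deriv V r| * r⁻¹) * |v.1 * w.1 + v.2 * w.2| + |p.1 * v.1 + p.2 * v.2| *
          (|deriv (deriv V) r * r⁻¹ + deriv V r * -((r ^ 2)⁻¹)| *
            (r⁻¹ * |p.1 * w.1 + p.2 * w.2|)) := by
          rw [abs_mul, hWabs, abs_mul, abs_mul, abs_mul, abs_inv, abs_of_pos h0]
      _ ≤ (|deriv V r| * r⁻¹) * (emag v * emag w) + (r * emag v) *
          ((|deriv (deriv V) r| * r⁻¹ + |deriv V r| * (r ^ 2)⁻¹) *
            (r⁻¹ * (r * emag w))) := by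
          have hinv : (0:ℝ) ≤ r⁻¹ := inv_nonneg.2 h0.le
          have e1 : (|deriv V r| * r⁻¹) * |v.1 * w.1 + v.2 * w.2| ≤
              (|deriv V r| * r⁻¹) * (emag v * emag w) :=
            mul_le_mul_of_nonneg_left (abs_dot_le v w)
              (mul_nonneg (abs_nonneg _) hinv)
          have inner1 : r⁻¹ * |p.1 * w.1 + p.2 * w.2| ≤ r⁻¹ * (r * emag w) :=
            mul_le_mul_of_nonneg_left (abs_dot_le p w) hinv
          have inner2 : |deriv (deriv V) r * r⁻¹ + deriv V r * -((r ^ 2)⁻¹)| *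
              (r⁻¹ * |p.1 * w.1 + p.2 * w.2|) ≤
              (|deriv (deriv V) r| * r⁻¹ + |deriv V r| * (r ^ 2)⁻¹) * (r⁻¹ * (r * emag w)) :=
            mul_le_mul hC inner1 (mul_nonneg hinv (abs_nonneg _))
              (add_nonneg (mul_nonneg (abs_nonneg _) hinv)
                (mul_nonneg (abs_nonneg _) (inv_nonneg.2 (sq_nonneg r))))
          have e2 : |p.1 * v.1 + p.2 * v.2| *
              (|deriv (deriv V) r * r⁻¹ + deriv V r * -((r ^ 2)⁻¹)| *
                (r⁻¹ * |p.1 * w.1 + p.2 * w.2|)) ≤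
              (r * emag v) * ((|deriv (deriv V) r| * r⁻¹ + |deriv V r| * (r ^ 2)⁻¹) *
                (r⁻¹ * (r * emag w))) :=
            mul_le_mul (abs_dot_le p v) inner2
              (mul_nonneg (abs_nonneg _) (mul_nonneg hinv (abs_nonneg _)))
              (mul_nonneg h0.le (emag_nonneg v))
          exact add_le_add e1 e2
      _ = (|deriv (deriv V) r| + 2 * (|deriv V r| * r⁻¹)) * (emag v * emag w) := by
          field_simp
          ring
      _ ≤ (|deriv (deriv V) r| + 2 * |deriv V r * r⁻¹|) * (emag v * emag w) := by
          rw [abs_mul, abs_inv, abs_of_pos h0]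
  exact ⟨P1, P2, P3, P4, P5⟩
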